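/- Let M, L, d be positive natural numbers, and let X ∈ ℝ^{M×d}, Z, Z* ∈ ℝ^{L×d}, W_Q, W_K, W_V ∈ ℝ^{d×d} with ‖X‖_F ≤ √d and ‖Z*‖₂ ≤ C for some C ≥ 0. Let σ : ℝ^{M×L} → ℝ^{M×L} be Lipschitz with constant L_σ in the Frobenius norm and satisfy ‖σ(A)‖_F ≤ 1 for every A ∈ ℝ^{M×L}. Define Q = X·W_Q, K = Z·W_K, K* = Z*·W_K, ΔZ = Z − Z*, the cross-attention output X̃ = σ(Q·Kᵀ/√d)·Z·W_V, and the ideal output X^out = σ(Q·(K*)ᵀ/√d)·Z*·W_V. Then the alignment error satisfies ‖X̃ − X^out‖_F ≤ ( L_σ·C·‖W_Q‖₂·‖W_K‖₂·‖W_V‖₂ + ‖W_V‖₂ )·‖ΔZ‖_F. -/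

import Mathlib

open Matrix

/-- Frobenius norm of a real matrix: `‖A‖_F = √(∑ i ∑ j A i j ²)`. -/
noncomputable def frobNorm {m n : Type*} [Fintype m] [Fintype n] (A : Matrix m n ℝ) : ℝ :=
  Real.sqrt (∑ i, ∑ j, (A i j) ^ 2)

/-- Spectral (`ℓ² → ℓ²` operator) norm of a real matrix. -/
noncomputable def specNorm {m n : Type*} [Fintype m] [Fintype n] [DecidableEq n]
    (A : Matrix m n ℝ) : ℝ :=
  ‖LinearMap.toContinuousLinearMap (Matrix.toEuclideanLin A)‖

namespace Stmt16Aux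

variable {m n p : Type*} [Fintype m] [Fintype n] [Fintype p]

lemma frobNorm_nonneg (A : Matrix m n ℝ) : 0 ≤ frobNorm A := Real.sqrt_nonneg _

lemma frobNorm_sq (A : Matrix m n ℝ) : frobNorm A ^ 2 = ∑ i, ∑ j, (A i j) ^ 2 :=
  Real.sq_sqrt (by positivity)

section Frob

attribute [local instance] Matrix.frobeniusSeminormedAddCommGroup

lemma frobNorm_eq (A : Matrix m n ℝ) : frobNorm A = ‖A‖ := by
  rw [Matrix.frobenius_norm_def, frobNorm, Real.sqrt_eq_rpow]
  congr 1
  refine Finset.sum_congr rfl fun i _ => Finset.sum_congr rfl fun j _ => ?_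
  rw [Real.rpow_two, Real.norm_eq_abs, sq_abs]

lemma frobNorm_triangle (A B : Matrix m n ℝ) :
    frobNorm (A + B) ≤ frobNorm A + frobNorm B := by
  simp only [frobNorm_eq]; exact norm_add_le _ _

end Frob

lemma frobNorm_smul (c : ℝ) (A : Matrix m n ℝ) : frobNorm (c • A) = |c| * frobNorm A := by
  unfold frobNorm
  simp only [Matrix.smul_apply, smul_eq_mul, mul_pow, ← Finset.mul_sum]
  rw [Real.sqrt_mul (sq_nonneg c), Real.sqrt_sq_eq_abs]

section Spec

open scoped Matrix.Norms.L2Operator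

variable [DecidableEq n] [DecidableEq p]

lemma specNorm_eq (A : Matrix m n ℝ) : specNorm A = ‖A‖ := rfl

lemma specNorm_nonneg (A : Matrix m n ℝ) : 0 ≤ specNorm A := by
  rw [specNorm_eq]; exact norm_nonneg _

lemma specNorm_mul (A : Matrix m n ℝ) (B : Matrix n p ℝ) :
    specNorm (A * B) ≤ specNorm A * specNorm B := by
  simp only [specNorm_eq]; exact Matrix.l2_opNorm_mul A B

lemma specNorm_transpose [DecidableEq m] (A : Matrix m n ℝ) : specNorm Aᵀ = specNorm A := by
  have h : Aᴴ = Aᵀ := by ext i j; simp [Matrix.conjTranspose_apply]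
  rw [specNorm_eq, specNorm_eq, ← Matrix.l2_opNorm_conjTranspose A, h]

omit [DecidableEq n] in
lemma euclid_norm_sq (x : EuclideanSpace ℝ n) : ‖x‖ ^ 2 = ∑ i, (x i) ^ 2 := by
  rw [EuclideanSpace.norm_eq, Real.sq_sqrt (by positivity)]
  simp [Real.norm_eq_abs, sq_abs]

lemma mulVec_sq_le (B : Matrix m n ℝ) (v : n → ℝ) :
    ∑ i, ((B *ᵥ v) i) ^ 2 ≤ specNorm B ^ 2 * ∑ j, (v j) ^ 2 := by
  set x : EuclideanSpace ℝ n := (WithLp.equiv 2 (n → ℝ)).symm v with hx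
  have h := Matrix.l2_opNorm_mulVec B x
  have h2 := pow_le_pow_left₀ (norm_nonneg _) h 2
  rw [mul_pow] at h2
  have e1 : ‖(EuclideanSpace.equiv m ℝ).symm (B *ᵥ x)‖ ^ 2 = ∑ i, ((B *ᵥ v) i) ^ 2 := by
    rw [euclid_norm_sq]; rfl
  have e2 : ‖x‖ ^ 2 = ∑ j, (v j) ^ 2 := by rw [euclid_norm_sq]; rfl
  rw [e1, e2] at h2
  exact h2

lemma frob_mul_le (A : Matrix m n ℝ) (B : Matrix n p ℝ) :
    frobNorm (A * B) ≤ frobNorm A * specNorm B := by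
  have key : ∀ i, ∑ j, ((A * B) i j) ^ 2 ≤ specNorm B ^ 2 * ∑ k, (A i k) ^ 2 := by
    intro i
    have h := mulVec_sq_le Bᵀ (A i)
    rw [specNorm_transpose] at h
    have e : ∀ j, (Bᵀ *ᵥ (A i)) j = (A * B) i j := by
      intro j
      simp [Matrix.mulVec, Matrix.mul_apply, dotProduct, mul_comm]
    calc ∑ j, ((A * B) i j) ^ 2 = ∑ j, ((Bᵀ *ᵥ (A i)) j) ^ 2 := by
          refine Finset.sum_congr rfl fun j _ => by rw [e]
      _ ≤ specNorm B ^ 2 * ∑ k, (A i k) ^ 2 := h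
  unfold frobNorm
  have h1 : ∑ i, ∑ j, ((A * B) i j) ^ 2 ≤ specNorm B ^ 2 * ∑ i, ∑ k, (A i k) ^ 2 := by
    rw [Finset.mul_sum]
    exact Finset.sum_le_sum fun i _ => key i
  calc Real.sqrt (∑ i, ∑ j, ((A * B) i j) ^ 2)
      ≤ Real.sqrt (specNorm B ^ 2 * ∑ i, ∑ k, (A i k) ^ 2) := Real.sqrt_le_sqrt h1
    _ = specNorm B * Real.sqrt (∑ i, ∑ k, (A i k) ^ 2) := by
        rw [Real.sqrt_mul (sq_nonneg _), Real.sqrt_sq (specNorm_nonneg B)]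
    _ = Real.sqrt (∑ i, ∑ k, (A i k) ^ 2) * specNorm B := mul_comm _ _

lemma spec_le_frob (A : Matrix m n ℝ) : specNorm A ≤ frobNorm A := by
  unfold specNorm
  refine ContinuousLinearMap.opNorm_le_bound _ (frobNorm_nonneg A) fun x => ?_
  have hx : ‖(LinearMap.toContinuousLinearMap (Matrix.toEuclideanLin A)) x‖
      = ‖Matrix.toEuclideanLin A x‖ := rfl
  rw [hx]
  have h2 : ‖Matrix.toEuclideanLin A x‖ ^ 2 ≤ (frobNorm A * ‖x‖) ^ 2 := by
    rw [euclid_norm_sq]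
    have hrow : ∀ i, ((Matrix.toEuclideanLin A x) i) ^ 2
        ≤ (∑ j, (A i j) ^ 2) * ∑ j, (x j) ^ 2 := by
      intro i
      have hcs := Finset.sum_mul_sq_le_sq_mul_sq Finset.univ (fun j => A i j) (fun j => x j)
      have e : (Matrix.toEuclideanLin A x) i = ∑ j, A i j * x j := by
        simp [Matrix.toEuclideanLin_apply, Matrix.mulVec, dotProduct]
      rw [e]; exact hcs
    calc ∑ i, ((Matrix.toEuclideanLin A x) i) ^ 2
        ≤ ∑ i, (∑ j, (A i j) ^ 2) * ∑ j, (x j) ^ 2 := Finset.sum_le_sum fun i _ => hrow i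
      _ = (frobNorm A * ‖x‖) ^ 2 := by
          rw [← Finset.sum_mul, mul_pow, frobNorm_sq, euclid_norm_sq]
  have h3 := Real.sqrt_le_sqrt h2
  rwa [Real.sqrt_sq (norm_nonneg _),
    Real.sqrt_sq (mul_nonneg (frobNorm_nonneg A) (norm_nonneg x))] at h3

end Spec

end Stmt16Aux

open Stmt16Aux in
/-- (Combined alignment error bound for cross-attention.)
With `‖X‖_F ≤ √d`, `‖Z*‖₂ ≤ C`, `σ` `L_σ`-Lipschitz in Frobenius norm and
`‖σ(A)‖_F ≤ 1` for all `A`, setting `Q = X·W_Q`, `K = Z·W_K`, `K* = Z*·W_K`,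
`ΔZ = Z − Z*`, `X̃ = σ(Q·Kᵀ/√d)·Z·W_V` and `X^out = σ(Q·(K*)ᵀ/√d)·Z*·W_V`:
`‖X̃ − X^out‖_F ≤ (L_σ·C·‖W_Q‖₂·‖W_K‖₂·‖W_V‖₂ + ‖W_V‖₂)·‖ΔZ‖_F`. -/
theorem stmt_16 (M L d : ℕ) (hM : 0 < M) (hL : 0 < L) (hd : 0 < d)
    (X : Matrix (Fin M) (Fin d) ℝ) (hX : frobNorm X ≤ Real.sqrt d)
    (Z Zstar : Matrix (Fin L) (Fin d) ℝ)
    (WQ WK WV : Matrix (Fin d) (Fin d) ℝ)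
    (C : ℝ) (hC : 0 ≤ C) (hZstar : specNorm Zstar ≤ C)
    (σ : Matrix (Fin M) (Fin L) ℝ → Matrix (Fin M) (Fin L) ℝ)
    (Lσ : ℝ) (hLσ : 0 ≤ Lσ)
    (hlip : ∀ A B : Matrix (Fin M) (Fin L) ℝ,
      frobNorm (σ A - σ B) ≤ Lσ * frobNorm (A - B))
    (hσ : ∀ A : Matrix (Fin M) (Fin L) ℝ, frobNorm (σ A) ≤ 1) :
    frobNorm (σ ((1 / Real.sqrt d) • (X * WQ * (Z * WK)ᵀ)) * (Z * WV)
          - σ ((1 / Real.sqrt d) • (X * WQ * (Zstar * WK)ᵀ)) * (Zstar * WV))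
      ≤ (Lσ * C * specNorm WQ * specNorm WK * specNorm WV + specNorm WV)
          * frobNorm (Z - Zstar) := by
  set S1 := σ ((1 / Real.sqrt d) • (X * WQ * (Z * WK)ᵀ)) with hS1
  set S2 := σ ((1 / Real.sqrt d) • (X * WQ * (Zstar * WK)ᵀ)) with hS2
  set D := Z - Zstar with hD
  set q := specNorm WQ with hq
  set k := specNorm WK with hk
  set v := specNorm WV with hv
  set f := frobNorm D with hf
  have hsd : (0:ℝ) < Real.sqrt d := Real.sqrt_pos.mpr (by exact_mod_cast hd)
  have hq0 : 0 ≤ q := specNorm_nonneg _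
  have hk0 : 0 ≤ k := specNorm_nonneg _
  have hv0 : 0 ≤ v := specNorm_nonneg _
  have hf0 : 0 ≤ f := frobNorm_nonneg _
  -- decomposition
  have hsplit : S1 * (Z * WV) - S2 * (Zstar * WV)
      = S1 * (D * WV) + (S1 - S2) * (Zstar * WV) := by
    rw [hD, Matrix.sub_mul, Matrix.mul_sub, Matrix.sub_mul]
    abel
  -- term 1 bound
  have hb1 : frobNorm (S1 * (D * WV)) ≤ f * v := by
    have h1 : frobNorm (S1 * (D * WV)) ≤ frobNorm S1 * specNorm (D * WV) :=
      frob_mul_le _ _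
    have h2 : specNorm (D * WV) ≤ f * v := by
      calc specNorm (D * WV) ≤ specNorm D * v := specNorm_mul _ _
        _ ≤ f * v := mul_le_mul_of_nonneg_right (spec_le_frob D) hv0
    calc frobNorm (S1 * (D * WV)) ≤ frobNorm S1 * specNorm (D * WV) := h1
      _ ≤ 1 * (f * v) := by
          exact mul_le_mul (hσ _) h2 (specNorm_nonneg _) zero_le_one
      _ = f * v := one_mul _
  -- argument difference
  have harg : (1 / Real.sqrt d) • (X * WQ * (Z * WK)ᵀ)
        - (1 / Real.sqrt d) • (X * WQ * (Zstar * WK)ᵀ)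
      = (1 / Real.sqrt d) • (X * WQ * (D * WK)ᵀ) := by
    rw [← smul_sub]
    congr 1
    rw [hD, Matrix.sub_mul, Matrix.transpose_sub, Matrix.mul_sub]
  have hargbound : frobNorm ((1 / Real.sqrt d) • (X * WQ * (D * WK)ᵀ)) ≤ q * k * f := by
    rw [frobNorm_smul]
    have habs : |1 / Real.sqrt d| = 1 / Real.sqrt d := abs_of_pos (by positivity)
    rw [habs]
    have hE : frobNorm (X * WQ * (D * WK)ᵀ) ≤ Real.sqrt d * q * (f * k) := by
      have h1 : frobNorm (X * WQ * (D * WK)ᵀ)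
          ≤ frobNorm (X * WQ) * specNorm ((D * WK)ᵀ) := frob_mul_le _ _
      have h2 : frobNorm (X * WQ) ≤ Real.sqrt d * q := by
        calc frobNorm (X * WQ) ≤ frobNorm X * q := frob_mul_le _ _
          _ ≤ Real.sqrt d * q := mul_le_mul_of_nonneg_right hX hq0
      have h3 : specNorm ((D * WK)ᵀ) ≤ f * k := by
        rw [specNorm_transpose]
        calc specNorm (D * WK) ≤ specNorm D * k := specNorm_mul _ _
          _ ≤ f * k := mul_le_mul_of_nonneg_right (spec_le_frob D) hk0
      calc frobNorm (X * WQ * (D * WK)ᵀ)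
          ≤ frobNorm (X * WQ) * specNorm ((D * WK)ᵀ) := h1
        _ ≤ (Real.sqrt d * q) * (f * k) :=
            mul_le_mul h2 h3 (specNorm_nonneg _) (by positivity)
    calc (1 / Real.sqrt d) * frobNorm (X * WQ * (D * WK)ᵀ)
        ≤ (1 / Real.sqrt d) * (Real.sqrt d * q * (f * k)) := by
          exact mul_le_mul_of_nonneg_left hE (by positivity)
      _ = q * k * f := by field_simp
  -- term 2 bound
  have hb2 : frobNorm ((S1 - S2) * (Zstar * WV)) ≤ (Lσ * (q * k * f)) * (C * v) := by
    have h1 : frobNorm ((S1 - S2) * (Zstar * WV))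
        ≤ frobNorm (S1 - S2) * specNorm (Zstar * WV) := frob_mul_le _ _
    have h2 : frobNorm (S1 - S2) ≤ Lσ * (q * k * f) := by
      have := hlip ((1 / Real.sqrt d) • (X * WQ * (Z * WK)ᵀ))
        ((1 / Real.sqrt d) • (X * WQ * (Zstar * WK)ᵀ))
      rw [harg] at this
      calc frobNorm (S1 - S2)
          ≤ Lσ * frobNorm ((1 / Real.sqrt d) • (X * WQ * (D * WK)ᵀ)) := this
        _ ≤ Lσ * (q * k * f) := mul_le_mul_of_nonneg_left hargbound hLσ
    have h3 : specNorm (Zstar * WV) ≤ C * v := by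
      calc specNorm (Zstar * WV) ≤ specNorm Zstar * v := specNorm_mul _ _
        _ ≤ C * v := mul_le_mul_of_nonneg_right hZstar hv0
    calc frobNorm ((S1 - S2) * (Zstar * WV))
        ≤ frobNorm (S1 - S2) * specNorm (Zstar * WV) := h1
      _ ≤ (Lσ * (q * k * f)) * (C * v) :=
          mul_le_mul h2 h3 (specNorm_nonneg _) (by positivity)
  -- combine
  have htot : frobNorm (S1 * (Z * WV) - S2 * (Zstar * WV))
      ≤ f * v + (Lσ * (q * k * f)) * (C * v) := by
    rw [hsplit]
    calc frobNorm (S1 * (D * WV) + (S1 - S2) * (Zstar * WV))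
        ≤ frobNorm (S1 * (D * WV)) + frobNorm ((S1 - S2) * (Zstar * WV)) :=
          frobNorm_triangle _ _
      _ ≤ f * v + (Lσ * (q * k * f)) * (C * v) := add_le_add hb1 hb2
  have heq : f * v + (Lσ * (q * k * f)) * (C * v)
      = (Lσ * C * q * k * v + v) * f := by ring
  linarith [htot, heq.le]
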